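/- Let G be an m × n_r matrix over GF(2) with linearly independent rows (full row-rank), where m ≤ n_r. Define the indicator I_G(r) for r ∈ GF(2)^{n_r} by I_G(r) = 1 if r lies in the row space of G and r ≠ 0, and I_G(r) = 0 otherwise. Then for every k ∈ GF(2)^m and every r ∈ GF(2)^{n_r}, the absolute value of 2^{−n_r} · Σ_{a ∈ GF(2)^{n_r}} ( [G a = k] − 2^{−m} ) · (−1)^{a·r} equals 2^{−m} · I_G(r), where [G a = k] is 1 if the matrix–vector product G a (over GF(2)) equals k and 0 otherwise, and (−1)^{a·r} = +1 if the GF(2) inner product a·r equals 0 and −1 if it equals 1. -/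

import Mathlib

open scoped Classical

open Matrix

private lemma zmod2_sign_cases (x : ZMod 2) : x = 0 ∨ x = 1 := by revert x; decide

private lemma sum_sign_submodule {n : ℕ} (K : Submodule (ZMod 2) (Fin n → ZMod 2))
    (s : Fin n → ZMod 2) :
    ∑ b : K, (if (b : Fin n → ZMod 2) ⬝ᵥ s = 0 then (1:ℝ) else -1) =
      if ∀ b ∈ K, b ⬝ᵥ s = 0 then (Fintype.card K : ℝ) else 0 := by
  by_cases h : ∀ b ∈ K, b ⬝ᵥ s = 0
  · rw [if_pos h, Finset.sum_congr rfl (fun b _ => if_pos (h b.1 b.2))]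
    simp [Finset.card_univ]
  · rw [if_neg h]
    push_neg at h
    obtain ⟨b₀, hb₀K, hb₀⟩ := h
    have hb₀1 : b₀ ⬝ᵥ s = 1 := (zmod2_sign_cases _).resolve_left hb₀
    set B : K := ⟨b₀, hb₀K⟩ with hB
    set F : K → ℝ := fun b => if (b : Fin n → ZMod 2) ⬝ᵥ s = 0 then (1:ℝ) else -1 with hF
    have key : ∀ b : K, F (B + b) = - F b := by
      intro b
      have hdp : ((B + b : K) : Fin n → ZMod 2) ⬝ᵥ s = 1 + (b : Fin n → ZMod 2) ⬝ᵥ s := by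
        rw [Submodule.coe_add, add_dotProduct, hB, hb₀1]
      simp only [hF]
      rw [hdp]
      rcases zmod2_sign_cases ((b : Fin n → ZMod 2) ⬝ᵥ s) with h' | h'
      · rw [h', if_pos rfl, if_neg (by decide : ¬((1:ZMod 2) + 0 = 0))]
      · rw [h', if_pos (by decide : (1:ZMod 2) + 1 = 0),
          if_neg (by decide : ¬((1:ZMod 2) = 0))]
        norm_num
    have h1 : ∑ b : K, F (B + b) = ∑ b : K, F b := by
      exact Equiv.sum_comp (Equiv.addLeft B) F
    have h2 : ∑ b : K, F (B + b) = - ∑ b : K, F b := by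
      rw [Finset.sum_congr rfl (fun b _ => key b), Finset.sum_neg_distrib]
    have := h1.symm.trans h2
    linarith

private lemma sum_sign_total {n : ℕ} (s : Fin n → ZMod 2) :
    ∑ a : Fin n → ZMod 2, (if a ⬝ᵥ s = 0 then (1:ℝ) else -1) =
      if s = 0 then ((2:ℝ) ^ n) else 0 := by
  have := sum_sign_submodule (⊤ : Submodule (ZMod 2) (Fin n → ZMod 2)) s
  have hsum : ∑ a : Fin n → ZMod 2, (if a ⬝ᵥ s = 0 then (1:ℝ) else -1)
      = ∑ b : (⊤ : Submodule (ZMod 2) (Fin n → ZMod 2)),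
          (if (b : Fin n → ZMod 2) ⬝ᵥ s = 0 then (1:ℝ) else -1) := by
    exact (Equiv.sum_comp (Submodule.topEquiv (M := Fin n → ZMod 2)).toEquiv
      (fun a => if a ⬝ᵥ s = 0 then (1:ℝ) else -1)).symm
  rw [hsum, this]
  have hcond : (∀ b ∈ (⊤ : Submodule (ZMod 2) (Fin n → ZMod 2)), b ⬝ᵥ s = 0) ↔ s = 0 := by
    constructor
    · intro h
      funext j
      have := h (Pi.single j 1) trivial
      simpa [single_dotProduct] using this
    · rintro rfl b _
      simp
  have hcard : (Fintype.card (⊤ : Submodule (ZMod 2) (Fin n → ZMod 2)) : ℝ) = (2:ℝ) ^ n := by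
    rw [Fintype.card_congr (Submodule.topEquiv (M := Fin n → ZMod 2)).toEquiv]
    simp [ZMod.card]
  by_cases hs : s = 0
  · rw [if_pos (hcond.2 hs), if_pos hs, hcard]
  · rw [if_neg (fun h => hs (hcond.1 h)), if_neg hs]

private lemma dual_mem_span_iff {m n : ℕ} (G : Matrix (Fin m) (Fin n) (ZMod 2))
    (hsurj : Function.Surjective G.mulVecLin) (s : Fin n → ZMod 2) :
    (∀ b ∈ LinearMap.ker G.mulVecLin, b ⬝ᵥ s = 0) ↔
      s ∈ Submodule.span (ZMod 2) (Set.range G) := by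
  constructor
  · intro hs
    set f : (Fin n → ZMod 2) →ₗ[ZMod 2] ZMod 2 :=
      { toFun := fun x => x ⬝ᵥ s
        map_add' := fun x y => add_dotProduct x y s
        map_smul' := fun c x => smul_dotProduct c x s } with hf
    have hKf : LinearMap.ker G.mulVecLin ≤ LinearMap.ker f := fun b hb => hs b hb
    set e := LinearMap.quotKerEquivOfSurjective G.mulVecLin hsurj with he
    set g : (Fin m → ZMod 2) →ₗ[ZMod 2] ZMod 2 :=
      ((LinearMap.ker G.mulVecLin).liftQ f hKf).comp e.symm.toLinearMap with hgdef
    have hg : ∀ x, g (G.mulVecLin x) = f x := by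
      intro x
      have h1 : e (Submodule.Quotient.mk x) = G.mulVecLin x := by
        simp [he, LinearMap.quotKerEquivOfSurjective]
      have h2 : e.symm (G.mulVecLin x) = Submodule.Quotient.mk x := by
        rw [← h1, LinearEquiv.symm_apply_apply]
      calc g (G.mulVecLin x)
          = ((LinearMap.ker G.mulVecLin).liftQ f hKf) (e.symm (G.mulVecLin x)) := rfl
        _ = f x := by rw [h2, Submodule.liftQ_apply]
    set c : Fin m → ZMod 2 := fun i => g (fun j => if i = j then 1 else 0) with hc
    have hgy : ∀ y, g y = y ⬝ᵥ c := by
      intro y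
      rw [LinearMap.pi_apply_eq_sum_univ g y]
      simp [dotProduct, hc, smul_eq_mul]
    have hxs : ∀ x, x ⬝ᵥ s = x ⬝ᵥ Matrix.vecMul c G := by
      intro x
      have h3 := hg x
      rw [hgy] at h3
      have : x ⬝ᵥ s = f x := rfl
      rw [this, ← h3, Matrix.mulVecLin_apply, dotProduct_comm,
        Matrix.dotProduct_mulVec]
      exact dotProduct_comm _ _
    have hse : s = Matrix.vecMul c G := by
      funext j
      have := hxs (Pi.single j 1)
      simpa [single_dotProduct] using this
    rw [hse, show Set.range G = Set.range G.row from rfl, ← range_vecMulLinear]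
    exact ⟨c, rfl⟩
  · intro hsW b hb
    rw [show Set.range G = Set.range G.row from rfl, ← range_vecMulLinear] at hsW
    obtain ⟨c, rfl⟩ := hsW
    have hb' : G.mulVec b = 0 := hb
    rw [Matrix.vecMulLinear_apply, dotProduct_comm, ← Matrix.dotProduct_mulVec, hb',
      dotProduct_zero]

private lemma sign_add' (x y : ZMod 2) :
    (if x + y = 0 then (1:ℝ) else -1)
      = (if x = 0 then (1:ℝ) else -1) * (if y = 0 then (1:ℝ) else -1) := by
  rcases zmod2_sign_cases x with h|h <;> rcases zmod2_sign_cases y with h'|h' <;>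
      subst h <;> subst h'
  · norm_num
  · norm_num [show (1:ZMod 2) ≠ 0 by decide]
  · norm_num [show (1:ZMod 2) ≠ 0 by decide]
  · rw [if_pos (by decide : (1:ZMod 2)+1 = 0), if_neg (by decide : ¬((1:ZMod 2)=0))]
    norm_num


/-- For a full row-rank `m × n_r` matrix `G` over GF(2), the absolute value of
`2^{-n_r} Σ_a ([G a = k] - 2^{-m})·(-1)^{a·r}` equals `2^{-m}·I_G(r)`, where `I_G(r)` is
the indicator that `r` is a nonzero member of the row space of `G`. -/
theorem stmt_2 (m nr : ℕ) (hmn : m ≤ nr) (G : Matrix (Fin m) (Fin nr) (ZMod 2))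
    (hG : LinearIndependent (ZMod 2) (fun i => G i))
    (IG : (Fin nr → ZMod 2) → ℝ)
    (hIG : ∀ r, IG r =
      if r ∈ Submodule.span (ZMod 2) (Set.range G) ∧ r ≠ 0 then 1 else 0)
    (k : Fin m → ZMod 2) (r : Fin nr → ZMod 2) :
    |(2 : ℝ) ^ (-(nr : ℤ)) * ∑ a : Fin nr → ZMod 2,
        ((if G.mulVec a = k then (1 : ℝ) else 0) - (2 : ℝ) ^ (-(m : ℤ))) *
        (if dotProduct a r = 0 then (1 : ℝ) else -1)|
      = (2 : ℝ) ^ (-(m : ℤ)) * IG r := by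
  classical
  have hrank : G.rank = m := by simpa using hG.rank_matrix
  have htop : LinearMap.range G.mulVecLin = ⊤ := by
    apply Submodule.eq_top_of_finrank_eq
    rw [show Module.finrank (ZMod 2) ↥(LinearMap.range G.mulVecLin) = G.rank from rfl, hrank,
      Module.finrank_fin_fun]
  have hsurj : Function.Surjective G.mulVecLin := LinearMap.range_eq_top.1 htop
  set K := LinearMap.ker G.mulVecLin with hK
  have hfr : Module.finrank (ZMod 2) K = nr - m := by
    have h := LinearMap.finrank_range_add_finrank_ker G.mulVecLin
    have h2 : Module.finrank (ZMod 2) ↥(LinearMap.range G.mulVecLin) = m := by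
      rw [show Module.finrank (ZMod 2) ↥(LinearMap.range G.mulVecLin) = G.rank from rfl, hrank]
    rw [h2, Module.finrank_fin_fun] at h
    rw [hK]
    omega
  have hcardK : (Fintype.card K : ℝ) = (2:ℝ) ^ (nr - m : ℕ) := by
    rw [Module.card_eq_pow_finrank (K := ZMod 2) (V := K), hfr]
    simp [ZMod.card]
  obtain ⟨a₀, ha₀⟩ := hsurj k
  have ha₀' : G.mulVec a₀ = k := ha₀
  set c₀ : ℝ := if a₀ ⬝ᵥ r = 0 then (1:ℝ) else -1 with hc₀
  -- the two sub-sums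
  have hT1 : ∑ a : Fin nr → ZMod 2,
      (if G.mulVec a = k then (if a ⬝ᵥ r = 0 then (1:ℝ) else -1) else 0)
      = c₀ * (if r ∈ Submodule.span (ZMod 2) (Set.range G)
          then (Fintype.card K : ℝ) else 0) := by
    have hreindex := Equiv.sum_comp (Equiv.addLeft a₀)
      (fun a => (if G.mulVec a = k then (if a ⬝ᵥ r = 0 then (1:ℝ) else -1) else 0))
    rw [← hreindex]
    show ∑ a, (if G.mulVec (a₀ + a) = k then (if (a₀ + a) ⬝ᵥ r = 0 then (1:ℝ) else -1) else 0) = _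
    have hfa : ∀ a : Fin nr → ZMod 2,
        (if G.mulVec (a₀ + a) = k then (if (a₀ + a) ⬝ᵥ r = 0 then (1:ℝ) else -1) else 0)
        = c₀ * (if a ∈ K then (if a ⬝ᵥ r = 0 then (1:ℝ) else -1) else 0) := by
      intro a
      have hcond : G.mulVec (a₀ + a) = k ↔ a ∈ K := by
        rw [hK, LinearMap.mem_ker, Matrix.mulVecLin_apply, Matrix.mulVec_add, ha₀',
          add_eq_left]
      have hsign : (if (a₀ + a) ⬝ᵥ r = 0 then (1:ℝ) else -1)
          = c₀ * (if a ⬝ᵥ r = 0 then (1:ℝ) else -1) := by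
        rw [add_dotProduct, sign_add' (a₀ ⬝ᵥ r) (a ⬝ᵥ r)]
      by_cases h : a ∈ K
      · rw [if_pos (hcond.2 h), if_pos h, hsign]
      · rw [if_neg (fun hh => h (hcond.1 hh)), if_neg h, mul_zero]
    rw [Finset.sum_congr rfl (fun a _ => hfa a), ← Finset.mul_sum]
    congr 1
    have hsub : ∑ a : Fin nr → ZMod 2,
        (if a ∈ K then (if a ⬝ᵥ r = 0 then (1:ℝ) else -1) else 0)
        = ∑ b : K, (if (b : Fin nr → ZMod 2) ⬝ᵥ r = 0 then (1:ℝ) else -1) := by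
      rw [← Finset.sum_filter]
      exact Finset.sum_subtype _ (by simp) _
    rw [hsub, sum_sign_submodule K r]
    simp only [hK, dual_mem_span_iff G hsurj r]
  have hT2 := sum_sign_total (n := nr) r
  -- split the main sum
  have hS : ∑ a : Fin nr → ZMod 2,
      ((if G.mulVec a = k then (1 : ℝ) else 0) - (2 : ℝ) ^ (-(m : ℤ))) *
        (if dotProduct a r = 0 then (1 : ℝ) else -1)
      = c₀ * (if r ∈ Submodule.span (ZMod 2) (Set.range G)
            then (Fintype.card K : ℝ) else 0)
        - (2:ℝ) ^ (-(m:ℤ)) * (if r = 0 then ((2:ℝ) ^ nr) else 0) := by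
    have hsplit : ∀ a : Fin nr → ZMod 2,
        ((if G.mulVec a = k then (1 : ℝ) else 0) - (2 : ℝ) ^ (-(m : ℤ))) *
          (if dotProduct a r = 0 then (1 : ℝ) else -1)
        = (if G.mulVec a = k then (if a ⬝ᵥ r = 0 then (1:ℝ) else -1) else 0)
          - (2:ℝ) ^ (-(m:ℤ)) * (if a ⬝ᵥ r = 0 then (1:ℝ) else -1) := by
      intro a
      by_cases h : G.mulVec a = k <;> by_cases h' : a ⬝ᵥ r = 0 <;>
        simp [h, h', sub_mul] <;> ring
    rw [Finset.sum_congr rfl (fun a _ => hsplit a), Finset.sum_sub_distrib,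
      ← Finset.mul_sum, hT1, hT2]
  rw [hS, hcardK]
  -- arithmetic identities
  have h2 : (0:ℝ) < 2 := by norm_num
  have hpow : (2:ℝ) ^ ((nr - m : ℕ)) = (2:ℝ) ^ ((nr:ℤ) - m) := by
    rw [← zpow_natCast (2:ℝ) (nr - m)]
    congr 1
    omega
  by_cases hrW : r ∈ Submodule.span (ZMod 2) (Set.range G)
  · by_cases hr0 : r = 0
    · have hc₀1 : c₀ = 1 := by
        rw [hc₀, if_pos (by rw [hr0, dotProduct_zero])]
      rw [if_pos hrW, if_pos hr0, hc₀1, hIG r, if_neg (by simp [hr0])]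
      have : (2:ℝ) ^ ((nr - m : ℕ)) = (2:ℝ) ^ (-(m:ℤ)) * (2:ℝ) ^ nr := by
        rw [hpow, ← zpow_natCast (2:ℝ) nr, ← zpow_add₀ (ne_of_gt h2)]
        congr 1
        ring
      rw [one_mul, this]
      simp
    · rw [if_pos hrW, if_neg hr0, hIG r, if_pos ⟨hrW, hr0⟩, mul_zero, sub_zero, mul_one]
      have habs : |c₀| = 1 := by
        rw [hc₀]; by_cases h : a₀ ⬝ᵥ r = 0 <;> simp [h]
      rw [abs_mul, abs_mul, habs, abs_of_pos (zpow_pos h2 _),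
        abs_of_pos (pow_pos h2 _), one_mul, hpow, ← zpow_add₀ (ne_of_gt h2)]
      congr 1
      ring
  · have hr0 : r ≠ 0 := fun h => hrW (h ▸ Submodule.zero_mem _)
    rw [if_neg hrW, if_neg hr0, hIG r, if_neg (fun h => hrW h.1)]
    simp
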